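/- Fix an integer m ≥ 1 and let Y ∈ ℚ⟦X⟧ be the Fuss–Catalan generating series Y := ∑_{n≥0} (1/(mn+1))·C((m+1)n, n)·Xⁿ. Then Y satisfies the polynomial equation Y = 1 + X·Y^{m+1} in ℚ⟦X⟧. -/

import Mathlib

open Finset PowerSeries

/-- Generalized Rothe numbers `R_k(x) = (x/(x+k(m+1)))·C(x+k(m+1), k)`, written in a
subtraction-free integer form. For `x = 1` these are the Fuss–Catalan numbers. -/
def Ro (m x : ℕ) : ℕ → ℚ
  | 0 => 1
  | (j+1) => (Nat.choose (x + (j+1)*(m+1)) (j+1) : ℚ)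
      - (m+1) * (Nat.choose (x + j*(m+1) + m) j : ℚ)

@[simp] lemma Ro_zero (m x : ℕ) : Ro m x 0 = 1 := rfl

lemma Ro_succ (m x j : ℕ) : Ro m x (j+1) = (Nat.choose (x + (j+1)*(m+1)) (j+1) : ℚ)
    - (m+1) * (Nat.choose (x + j*(m+1) + m) j : ℚ) := rfl

/-- Cancellation helper: `(m+1)·C(j(m+1)+m, j) = C((j+1)(m+1), j+1)` in `ℚ`. -/
lemma choose_mul_base (m j : ℕ) :
    ((m : ℚ) + 1) * (Nat.choose (j*(m+1) + m) j : ℚ)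
      = (Nat.choose ((j+1)*(m+1)) (j+1) : ℚ) := by
  have h := Nat.add_one_mul_choose_eq (j*(m+1) + m) j
  have h2 : (j*(m+1) + m).succ = (j+1)*(m+1) := by ring_nf; omega
  rw [Nat.succ_eq_add_one] at h2
  rw [h2] at h
  have hq : ((j:ℚ)+1) * (((m : ℚ) + 1) * (Nat.choose (j*(m+1) + m) j : ℚ))
      = ((j:ℚ)+1) * (Nat.choose ((j+1)*(m+1)) (j+1) : ℚ) := by
    have := congrArg (fun t : ℕ => (t : ℚ)) h
    push_cast at this
    nlinarith [this]
  exact mul_left_cancel₀ (by positivity) hq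

/-- `Ro m 0 k` is `1` if `k = 0` and `0` otherwise. -/
lemma Ro_x_zero (m k : ℕ) : Ro m 0 k = if k = 0 then 1 else 0 := by
  cases k with
  | zero => simp
  | succ j =>
    simp only [Nat.succ_ne_zero, if_false, Ro_succ, Nat.zero_add, zero_add]
    have := choose_mul_base m j
    linarith [this]

/-- Pascal-type recurrence for the Rothe numbers. -/
lemma Ro_pascal (m x j : ℕ) : Ro m (x+1) (j+1) = Ro m x (j+1) + Ro m (x+m+1) j := by
  cases j with
  | zero =>
    simp only [Ro_succ, Ro_zero]
    norm_num [Nat.choose_one_right]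
  | succ i =>
    simp only [Ro_succ]
    -- abbreviate the three relevant "top" indices
    have e1 : x + 1 + (i+2)*(m+1) = (x + (i+2)*(m+1)) + 1 := by ring
    have e2 : x + 1 + (i+1)*(m+1) + m = (x + (i+1)*(m+1) + m) + 1 := by ring
    have e3 : x + m + 1 + (i+1)*(m+1) = x + (i+2)*(m+1) := by ring
    have e4 : x + m + 1 + i*(m+1) + m = x + (i+1)*(m+1) + m := by ring
    rw [e1, e2, e3, e4]
    rw [Nat.choose_succ_succ (x + (i+2)*(m+1)) (i+1),
        Nat.choose_succ_succ (x + (i+1)*(m+1) + m) i]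
    have e5 : x + (i+2)*(m+1) = (x + (i+1)*(m+1) + m) + 1 := by ring
    rw [e5, Nat.choose_succ_succ (x + (i+1)*(m+1) + m) (i+1)]
    push_cast
    ring

/-- Rothe's convolution identity. -/
lemma Ro_conv (m : ℕ) : ∀ n x y : ℕ,
    (∑ k ∈ range (n+1), Ro m x k * Ro m y (n - k)) = Ro m (x+y) n := by
  intro n
  induction n using Nat.strong_induction_on with
  | _ n ih =>
    intro x
    induction x with
    | zero =>
      intro y
      rw [Finset.sum_eq_single 0]
      · simp
      · intro b _ hb
        rw [Ro_x_zero, if_neg hb, zero_mul]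
      · intro h; simp at h
    | succ x ihx =>
      intro y
      cases n with
      | zero => simp
      | succ n' =>
        have split : ∀ k, Ro m (x+1) k * Ro m y (n'+1 - k)
            = Ro m x k * Ro m y (n'+1 - k)
              + (if k = 0 then 0 else Ro m (x+m+1) (k-1) * Ro m y (n'+1 - k)) := by
          intro k
          cases k with
          | zero => simp
          | succ j =>
            simp only [Nat.succ_ne_zero, if_false, Nat.succ_sub_one]
            rw [Ro_pascal]
            ring
        calc ∑ k ∈ range (n'+1+1), Ro m (x+1) k * Ro m y (n'+1 - k)
            = ∑ k ∈ range (n'+1+1), (Ro m x k * Ro m y (n'+1 - k)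
              + (if k = 0 then 0 else Ro m (x+m+1) (k-1) * Ro m y (n'+1 - k))) := by
              exact Finset.sum_congr rfl (fun k _ => split k)
          _ = (∑ k ∈ range (n'+1+1), Ro m x k * Ro m y (n'+1 - k))
              + ∑ k ∈ range (n'+1+1),
                (if k = 0 then 0 else Ro m (x+m+1) (k-1) * Ro m y (n'+1 - k)) := by
              rw [Finset.sum_add_distrib]
          _ = Ro m (x+y) (n'+1)
              + ∑ j ∈ range (n'+1), Ro m (x+m+1) j * Ro m y (n' - j) := by
              rw [ihx y, Finset.sum_range_succ' _ (n'+1)]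
              simp only [if_pos rfl, if_true, add_zero, Nat.succ_ne_zero, if_false,
                Nat.succ_sub_one, Nat.succ_sub_succ, Nat.sub_zero, Nat.add_sub_cancel]
          _ = Ro m (x+y) (n'+1) + Ro m (x+m+1+y) n' := by
              rw [ih n' (Nat.lt_succ_self n') (x+m+1) y]
          _ = Ro m (x+1+y) (n'+1) := by
              have := Ro_pascal m (x+y) n'
              rw [show x+1+y = (x+y)+1 by ring, this, show x+y+m+1 = x+m+1+y by ring]

/-- The product of the generating series. -/
lemma Ro_series_mul (m x y : ℕ) :
    PowerSeries.mk (Ro m x) * PowerSeries.mk (Ro m y) = PowerSeries.mk (Ro m (x+y)) := by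
  ext n
  rw [PowerSeries.coeff_mul, coeff_mk,
    Finset.Nat.sum_antidiagonal_eq_sum_range_succ_mk, ← Ro_conv m n x y]
  simp [coeff_mk]

lemma Ro_series_pow (m : ℕ) : ∀ r : ℕ,
    (PowerSeries.mk (Ro m 1)) ^ r = PowerSeries.mk (Ro m r)
  | 0 => by
      ext n
      rw [pow_zero, coeff_mk, Ro_x_zero]
      simp [PowerSeries.coeff_one]
  | (r+1) => by
      rw [pow_succ, Ro_series_pow m r, Ro_series_mul m r 1]

/-- The shift identity: `Ro m 1 (j+1) = Ro m (m+1) j`. -/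
lemma Ro_shift (m j : ℕ) : Ro m 1 (j+1) = Ro m (m+1) j := by
  cases j with
  | zero =>
    rw [Ro_succ, Ro_zero]
    norm_num [Nat.choose_one_right]
  | succ i =>
    rw [Ro_succ, Ro_succ]
    set N := (i+1)*(m+1) + m with hN
    have e1 : 1 + (i+2)*(m+1) = N + 2 := by rw [hN]; ring
    have e2 : 1 + (i+1)*(m+1) + m = N + 1 := by rw [hN]; ring
    have e3 : m + 1 + (i+1)*(m+1) = N + 1 := by rw [hN]; ring
    have e4 : m + 1 + i*(m+1) + m = N := by rw [hN]; ring
    rw [e1, e2, e3, e4]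
    rw [show N + 2 = (N+1) + 1 from rfl, Nat.choose_succ_succ (N+1) (i+1),
      Nat.choose_succ_succ N (i+1), Nat.choose_succ_succ N i]
    -- key: C(N, i+2) = m * C(N, i+1)
    have key : (Nat.choose N (i+2) : ℚ) = m * Nat.choose N (i+1) := by
      have h := Nat.choose_succ_right_eq N (i+1)
      have hsub : N - (i+1) = m * (i+2) := by
        rw [hN]; ring_nf; omega
      rw [hsub] at h
      have hq : ((i:ℚ)+2) * (Nat.choose N (i+2) : ℚ)
          = ((i:ℚ)+2) * ((m : ℚ) * Nat.choose N (i+1)) := by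
        have := congrArg (fun t : ℕ => (t : ℚ)) h
        push_cast at this
        nlinarith [this]
      exact mul_left_cancel₀ (by positivity) hq
    push_cast
    rw [key]
    ring

/-- The Fuss–Catalan coefficients agree with `Ro m 1`. -/
lemma Ro_one_eq (m n : ℕ) :
    Ro m 1 n = (1 / ((m : ℚ) * n + 1)) * (Nat.choose ((m + 1) * n) n : ℚ) := by
  cases n with
  | zero => simp
  | succ j =>
    rw [Ro_succ]
    have e1 : 1 + (j+1)*(m+1) = ((m+1)*(j+1)) + 1 := by ring
    have e2 : 1 + j*(m+1) + m = (m+1)*(j+1) := by ring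
    rw [e1, e2]
    set N := (m+1)*(j+1) with hN
    rw [Nat.choose_succ_succ N j]
    -- key: (j+1) * C(N, j+1) = (m(j+1)+1) * C(N, j)
    have h := Nat.choose_succ_right_eq N j
    have hsub : N - j = m * (j+1) + 1 := by rw [hN]; ring_nf; omega
    rw [hsub] at h
    have hq : ((j:ℚ)+1) * (Nat.choose N (j+1) : ℚ)
        = ((m:ℚ) * (j+1) + 1) * (Nat.choose N j : ℚ) := by
      have := congrArg (fun t : ℕ => (t : ℚ)) h
      push_cast at this
      nlinarith [this]
    have hd : ((m:ℚ) * (j+1) + 1) ≠ 0 := by positivity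
    push_cast
    field_simp
    nlinarith [hq]

/-- **Fuss–Catalan functional equation.** For `m ≥ 1`, the series
`Y = ∑_{n≥0} (1/(mn+1))·C((m+1)n, n)·Xⁿ` satisfies `Y = 1 + X·Y^{m+1}` in `ℚ⟦X⟧`. -/
theorem fussCatalan_functional_equation (m : ℕ) (hm : 1 ≤ m)
    (Y : PowerSeries ℚ)
    (hY : Y = PowerSeries.mk fun n =>
      (1 / ((m : ℚ) * n + 1)) * (Nat.choose ((m + 1) * n) n : ℚ)) :
    Y = 1 + PowerSeries.X * Y ^ (m + 1) := by
  have hY' : Y = PowerSeries.mk (Ro m 1) := by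
    rw [hY]; ext n; simp [coeff_mk, Ro_one_eq]
  rw [hY', Ro_series_pow m (m+1)]
  ext n
  cases n with
  | zero =>
    simp [coeff_mk, PowerSeries.coeff_one]
  | succ j =>
    rw [map_add, PowerSeries.coeff_succ_X_mul, coeff_mk, coeff_mk,
      PowerSeries.coeff_one, if_neg (Nat.succ_ne_zero j), zero_add, Ro_shift]
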